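/- Let (G, p) be a finite critical net in ℝ^k satisfying the balance condition. Then the sum of the leaf vectors vanishes: ∑_{l ∈ ∂X} u_l = 0. -/
import Mathlib


open scoped RealInnerProductSpace

/-- In a finite critical net in `ℝ^k` satisfying the balance condition,
the sum of the leaf vectors vanishes. -/
theorem sum_leaf_vectors_eq_zero
    {k : ℕ} (hk : 1 ≤ k) {V : Type*} [Fintype V] [DecidableEq V]
    (G : SimpleGraph V) [DecidableRel G.Adj]
    (p : V → EuclideanSpace ℝ (Fin k)) (hinj : Function.Injective p)
    (hdeg1 : ∀ x : V, 1 ≤ G.degree x)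
    (hnoLL : ∀ x y : V, G.Adj x y → ¬(G.degree x = 1 ∧ G.degree y = 1))
    (hbal : ∀ x : V, 2 ≤ G.degree x →
      ∑ y ∈ G.neighborFinset x, (‖p x - p y‖)⁻¹ • (p x - p y) = 0)
    (n : V → V) (hn : ∀ l : V, G.degree l = 1 → G.Adj l (n l)) :
    ∑ l ∈ Finset.univ.filter (fun l : V => G.degree l = 1),
      (‖p l - p (n l)‖)⁻¹ • (p l - p (n l)) = 0 := by
  set f : V → V → EuclideanSpace ℝ (Fin k) :=
    fun x y => (‖p x - p y‖)⁻¹ • (p x - p y) with hf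
  have hanti : ∀ x y : V, f y x = - f x y := by
    intro x y
    simp only [hf]
    rw [← neg_sub (p x) (p y), norm_neg, smul_neg]
  -- total sum vanishes by antisymmetry
  have T0 : ∑ x : V, ∑ y ∈ G.neighborFinset x, f x y = 0 := by
    have hrw : ∀ x : V, ∑ y ∈ G.neighborFinset x, f x y
        = ∑ y : V, if G.Adj x y then f x y else 0 := by
      intro x
      rw [SimpleGraph.neighborFinset_eq_filter, Finset.sum_filter]
    have key : (∑ x : V, ∑ y ∈ G.neighborFinset x, f x y)
        = - ∑ x : V, ∑ y ∈ G.neighborFinset x, f x y := by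
      conv_lhs => rw [Finset.sum_congr rfl (fun x _ => hrw x), Finset.sum_comm]
      rw [← Finset.sum_neg_distrib]
      refine Finset.sum_congr rfl fun y _ => ?_
      rw [hrw y, ← Finset.sum_neg_distrib]
      refine Finset.sum_congr rfl fun x _ => ?_
      by_cases h : G.Adj x y
      · rw [if_pos h, if_pos h.symm, hanti]
      · rw [if_neg h, if_neg (fun h' => h h'.symm), neg_zero]
    have h2 : (2:ℝ) • (∑ x : V, ∑ y ∈ G.neighborFinset x, f x y) = 0 := by
      rw [two_smul]; nth_rewrite 2 [key]; simp
    simpa using (smul_eq_zero.mp h2).resolve_left (by norm_num)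
  -- split the total sum
  have hsplit := Finset.sum_filter_add_sum_filter_not Finset.univ
    (fun l : V => G.degree l = 1) (fun x => ∑ y ∈ G.neighborFinset x, f x y)
  have hnonleaf : ∑ x ∈ Finset.univ.filter (fun l : V => ¬ G.degree l = 1),
      ∑ y ∈ G.neighborFinset x, f x y = 0 := by
    refine Finset.sum_eq_zero fun x hx => ?_
    have hx1 : ¬ G.degree x = 1 := (Finset.mem_filter.mp hx).2
    have hx0 := hdeg1 x
    exact hbal x (by omega)
  have hleaf : ∀ l : V, G.degree l = 1 →
      (∑ y ∈ G.neighborFinset l, f l y) = f l (n l) := by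
    intro l hl
    have hcard : (G.neighborFinset l).card = 1 := by
      rw [← SimpleGraph.card_neighborFinset_eq_degree] at hl; exact hl
    obtain ⟨a, ha⟩ := Finset.card_eq_one.mp hcard
    have hmem : n l ∈ G.neighborFinset l := by
      rw [SimpleGraph.mem_neighborFinset]; exact hn l hl
    rw [ha] at hmem ⊢
    rw [Finset.mem_singleton] at hmem
    rw [Finset.sum_singleton, hmem]
  calc ∑ l ∈ Finset.univ.filter (fun l : V => G.degree l = 1),
        (‖p l - p (n l)‖)⁻¹ • (p l - p (n l))
      = ∑ l ∈ Finset.univ.filter (fun l : V => G.degree l = 1),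
          ∑ y ∈ G.neighborFinset l, f l y := by
        refine Finset.sum_congr rfl fun l hl => ?_
        rw [hleaf l (Finset.mem_filter.mp hl).2]
    _ = 0 := by
        have := hsplit
        rw [hnonleaf, add_zero] at this
        rw [this, T0]
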